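/- Let n ≥ 1 and 0 < ε < 1. If positive reals λ_1,…,λ_n satisfy (n-1+ε)·Σ_{j=1}^n 1/λ_j² − 2·Σ_{j=1}^n 1/λ_j + 1 ≤ 0, then for every j one has λ_j ≤ (n-1+ε)/(1 − √(1−ε)). -/

import Mathlib

open Finset

set_option maxHeartbeats 1000000 in
theorem eigenvalue_upper_bound (n : ℕ) (hn : 1 ≤ n) (ε : ℝ) (hε0 : 0 < ε) (hε1 : ε < 1)
    (lam : Fin n → ℝ) (hpos : ∀ j, 0 < lam j)
    (h : (n - 1 + ε) * (∑ j, 1 / (lam j) ^ 2) - 2 * (∑ j, 1 / lam j) + 1 ≤ 0) :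
    ∀ j, lam j ≤ (n - 1 + ε) / (1 - Real.sqrt (1 - ε)) := by
  intro j
  have hn1 : (1:ℝ) ≤ (n:ℝ) := by exact_mod_cast hn
  set a : ℝ := (n:ℝ) - 1 + ε with ha
  have ha0 : 0 < a := by rw [ha]; linarith
  set s : ℝ := Real.sqrt (1 - ε) with hs
  have hs2 : s ^ 2 = 1 - ε := Real.sq_sqrt (by linarith)
  have hs0 : 0 < s := Real.sqrt_pos.mpr (by linarith)
  have hs1 : s < 1 := by nlinarith
  set S := ∑ i ∈ univ.erase j, 1 / lam i with hS
  set T := ∑ i ∈ univ.erase j, 1 / (lam i) ^ 2 with hT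
  have hsplit1 : (∑ i, 1 / lam i) = 1 / lam j + S :=
    (Finset.add_sum_erase _ _ (mem_univ j)).symm
  have hsplit2 : (∑ i, 1 / (lam i) ^ 2) = 1 / (lam j) ^ 2 + T :=
    (Finset.add_sum_erase _ _ (mem_univ j)).symm
  have hcard : ((univ.erase j).card : ℝ) = (n:ℝ) - 1 := by
    rw [Finset.card_erase_of_mem (mem_univ j), Finset.card_univ, Fintype.card_fin]
    have : (1:ℕ) ≤ n := hn
    push_cast [Nat.cast_sub this]
    ring
  have cauchy : S ^ 2 ≤ ((n:ℝ) - 1) * T := by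
    have := sq_sum_le_card_mul_sum_sq (s := univ.erase j) (f := fun i => 1 / lam i)
    rw [hS, hT]
    calc S ^ 2 ≤ ((univ.erase j).card : ℝ) * ∑ i ∈ univ.erase j, (1 / lam i) ^ 2 := this
      _ = ((n:ℝ) - 1) * ∑ i ∈ univ.erase j, 1 / (lam i) ^ 2 := by
          rw [hcard]; congr 1; apply Finset.sum_congr rfl; intro i _; rw [div_pow, one_pow]
  have hT0 : 0 ≤ T := Finset.sum_nonneg fun i _ => by positivity
  -- key: a * (a * T) - 2 * a * S + (n - 1) ≥ 0
  have key : 0 ≤ a * (a * T) - 2 * a * S + ((n:ℝ) - 1) := by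
    rcases eq_or_lt_of_le hn1 with h1 | h1
    · have hempty : univ.erase j = ∅ := by
        apply Finset.eq_empty_of_forall_notMem
        intro i hi
        have : (univ : Finset (Fin n)).card = 1 := by
          rw [Finset.card_univ, Fintype.card_fin]; exact_mod_cast h1.symm
        have hmem := Finset.mem_erase.mp hi
        have : i = j := by
          have := Finset.card_le_one.mp (le_of_eq this) i (mem_univ i) j (mem_univ j)
          exact this
        exact hmem.1 this
      have hS0 : S = 0 := by rw [hS, hempty, Finset.sum_empty]
      have hT0' : T = 0 := by rw [hT, hempty, Finset.sum_empty]
      rw [hS0, hT0']; nlinarith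
    · have hn2 : 0 < (n:ℝ) - 1 := by linarith
      nlinarith [sq_nonneg (a * S - ((n:ℝ) - 1)), mul_nonneg ha0.le hT0,
        mul_le_mul_of_nonneg_left cauchy (sq_nonneg a)]
  have hμ : 0 < 1 / lam j := by have := hpos j; positivity
  rw [hsplit1, hsplit2] at h
  clear_value a s S T
  clear hs hS hT
  -- derive (a * (1/lam j) - 1)^2 ≤ s^2
  have hquad : (a * (1 / lam j) - 1) ^ 2 ≤ s ^ 2 := by
    have h := h
    have hμ2 : 1 / (lam j) ^ 2 = (1 / lam j) ^ 2 := by rw [div_pow, one_pow]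
    have h' : a * ((1 / lam j) ^ 2) - 2 * (1 / lam j) + 1 ≤ 2 * S - a * T := by
      rw [← hμ2]; linarith
    have h2 := mul_le_mul_of_nonneg_left h' ha0.le
    have h'' : a * (a * ((1 / lam j) ^ 2)) - 2 * a * (1 / lam j) + a ≤ (n:ℝ) - 1 := by
      nlinarith [key, h2]
    rw [hs2]
    linarith [h'']
  have hlb : 1 - s ≤ a * (1 / lam j) := by nlinarith [sq_nonneg (a * (1 / lam j) - 1 + s)]
  have h1s : 0 < 1 - s := by linarith
  have hlamj := hpos j
  rw [le_div_iff₀ h1s]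
  have hinv : a * (1 / lam j) * lam j = a := by
    rw [mul_assoc, one_div, inv_mul_cancel₀ hlamj.ne', mul_one]
  linarith [mul_le_mul_of_nonneg_right hlb hlamj.le]
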